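/- Let A be a noncyclic finite abelian group acting on a (possibly infinite) group G and let θ be an A-signalizer functor on G. Let B ≤ A be noncyclic and define the B-signalizer functor θ₀ on G by θ₀(b) = θ(b) for all b ∈ B∖{1}. If θ₀ is complete, then θ is complete and the completion of θ equals the completion of θ₀. -/

import Mathlib

/-- The subgroup of fixed points of the action of `a` on `G`. -/
def fixedSub {A : Type*} (G : Type*) [Group A] [Group G] [MulDistribMulAction A G]
    (a : A) : Subgroup G where
  carrier := {g : G | a • g = g}
  one_mem' := smul_one a
  mul_mem' := by
    intro x y hx hy
    simp only [Set.mem_setOf_eq] at *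
    rw [smul_mul', hx, hy]
  inv_mem' := by
    intro x hx
    simp only [Set.mem_setOf_eq] at *
    rw [smul_inv', hx]

/-- The commutator `[G, A]` of a group `G` with a group `A` acting on it:
the subgroup generated by all `g⁻¹ • (a • g)`. -/
def actCommutator (A G : Type*) [Group A] [Group G] [MulDistribMulAction A G] :
    Subgroup G :=
  Subgroup.closure {x : G | ∃ (g : G) (a : A), x = g⁻¹ * (a • g)}

open Pointwise

/-- `θ` is a signalizer functor with respect to the subgroup `B` of `A`:
for each `b ∈ B∖{1}`, `θ b` is a finite `B`-invariant subgroup of `C_G(b)` of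
order coprime to `|B|`, and `θ b ⊓ C_G(b') ≤ θ b'` for all `b, b' ∈ B∖{1}`. -/
def IsSignalizerFunctorOn {A G : Type*} [Group A] [Group G] [MulDistribMulAction A G]
    (B : Subgroup A) (θ : A → Subgroup G) : Prop :=
  ∀ a ∈ B, a ≠ 1 →
    Finite (θ a) ∧ (∀ b ∈ B, b • θ a = θ a) ∧ θ a ≤ fixedSub G a ∧
      (Nat.card (θ a)).Coprime (Nat.card B) ∧
      ∀ b ∈ B, b ≠ 1 → θ a ⊓ fixedSub G b ≤ θ b

/-- `K` is a completion of the signalizer functor `θ` restricted to `B`: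
`K` is a finite `B`-invariant subgroup of order coprime to `|B|` with
`C_K(b) = θ b` for all `b ∈ B∖{1}`. -/
def IsCompletionOn {A G : Type*} [Group A] [Group G] [MulDistribMulAction A G]
    (B : Subgroup A) (θ : A → Subgroup G) (K : Subgroup G) : Prop :=
  Finite K ∧ (∀ b ∈ B, b • K = K) ∧ (Nat.card K).Coprime (Nat.card B) ∧
    ∀ b ∈ B, b ≠ 1 → K ⊓ fixedSub G b = θ b

/-- A `θ`-subgroup: a finite `A`-invariant subgroup `H` of order coprime to `|A|`
with `C_H(a) ≤ θ a` for all `a ∈ A∖{1}`. -/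
def IsThetaSubgroup {A G : Type*} [Group A] [Group G] [MulDistribMulAction A G]
    (θ : A → Subgroup G) (H : Subgroup G) : Prop :=
  Finite H ∧ (∀ a : A, a • H = H) ∧ (Nat.card H).Coprime (Nat.card A) ∧
    ∀ a : A, a ≠ 1 → H ⊓ fixedSub G a ≤ θ a

/-- `θ(B) = ⋂_{b ∈ B∖{1}} θ b`. -/
def thetaB {A G : Type*} [Group A] [Group G] [MulDistribMulAction A G]
    (θ : A → Subgroup G) (B : Subgroup A) : Subgroup G :=
  ⨅ (b : A) (_ : b ∈ B ∧ b ≠ 1), θ b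

/-- `‖θ‖ = |θ(A)| · ∏_{B ∈ hyp(A)} [θ(B) : θ(A)]`, where `hyp(A)` is the set of
subgroups of `A` of index `r`. -/
noncomputable def signNorm {A G : Type*} [Group A] [Group G] [MulDistribMulAction A G]
    (r : ℕ) (θ : A → Subgroup G) : ℕ :=
  Nat.card (thetaB θ ⊤) *
    ∏ᶠ (B : Subgroup A) (_ : B.index = r), (thetaB θ ⊤).relIndex (thetaB θ B)

open Pointwise Subgroup


namespace SGA

lemma mem_fixedSub {A G : Type*} [Group A] [Group G] [MulDistribMulAction A G]
    {a : A} {x : G} : x ∈ fixedSub G a ↔ a • x = x := Iff.rfl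

variable {E : Type*} [Group E] {K : Type*} [Group K] [MulDistribMulAction E K]

/-- action on an invariant subgroup -/
def subAct (L : Subgroup K) (h : ∀ (e : E) (x : K), x ∈ L → e • x ∈ L) :
    MulDistribMulAction E L where
  smul e x := ⟨e • (x : K), h e x x.2⟩
  one_smul x := Subtype.ext (one_smul E (x : K))
  mul_smul e f x := Subtype.ext (mul_smul e f (x : K))
  smul_mul e x y := Subtype.ext (smul_mul' e (x : K) (y : K))
  smul_one e := Subtype.ext (smul_one e)

lemma subAct_coe_smul (L : Subgroup K) (h) (e : E) (x : L) :
    ((@HSMul.hSMul E L L (@instHSMul E L (subAct L h).toSMul) e x : L) : K) = e • (x : K) := rfl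

lemma map_subtype_fixedSub (L : Subgroup K) (h) (e : E) :
    (@fixedSub E L _ _ (subAct L h) e).map L.subtype = L ⊓ fixedSub K e := by
  ext x
  constructor
  · rintro ⟨⟨y, hy⟩, hfix, rfl⟩
    exact ⟨hy, Subtype.ext_iff.mp hfix⟩
  · rintro ⟨hxL, hfix⟩
    exact ⟨⟨x, hxL⟩, Subtype.ext (by exact hfix), rfl⟩

variable (E) in
lemma invariant_map_eq (N : Subgroup K) (h : ∀ (e : E) (x : K), x ∈ N → e • x ∈ N) (e : E) :
    N.map (MulDistribMulAction.toMulAut E K e) = N := by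
  ext x
  constructor
  · rintro ⟨y, hy, rfl⟩
    exact h e y hy
  · intro hx
    exact ⟨e⁻¹ • x, h e⁻¹ x hx, by simp [MulDistribMulAction.toMulAut]⟩

/-- the automorphisms of the quotient by an invariant normal subgroup -/
def quotAut (N : Subgroup K) [N.Normal] (h : ∀ (e : E) (x : K), x ∈ N → e • x ∈ N) :
    E →* MulAut (K ⧸ N) where
  toFun e := QuotientGroup.congr N N (MulDistribMulAction.toMulAut E K e) (invariant_map_eq E N h e)
  map_one' := by
    ext x
    induction x using QuotientGroup.induction_on with
    | _ z =>
      rw [QuotientGroup.congr_mk]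
      show QuotientGroup.mk ((1 : E) • z) = QuotientGroup.mk z
      rw [one_smul]
  map_mul' e f := by
    ext x
    induction x using QuotientGroup.induction_on with
    | _ z =>
      show QuotientGroup.congr N N _ (invariant_map_eq E N h (e * f)) (QuotientGroup.mk z) =
        QuotientGroup.congr N N _ (invariant_map_eq E N h e)
          (QuotientGroup.congr N N _ (invariant_map_eq E N h f) (QuotientGroup.mk z))
      rw [QuotientGroup.congr_mk, QuotientGroup.congr_mk, QuotientGroup.congr_mk]
      show QuotientGroup.mk ((e * f) • z) = QuotientGroup.mk (e • f • z)
      rw [mul_smul]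

/-- action on quotient by an invariant normal subgroup -/
def quotAct (N : Subgroup K) [N.Normal] (h : ∀ (e : E) (x : K), x ∈ N → e • x ∈ N) :
    MulDistribMulAction E (K ⧸ N) :=
  MulDistribMulAction.compHom _ (quotAut N h)

lemma quotAct_smul_mk (N : Subgroup K) [N.Normal] (h) (e : E) (k : K) :
    (@HSMul.hSMul E (K ⧸ N) (K ⧸ N) (@instHSMul E (K ⧸ N) (quotAct N h).toSMul) e
      (QuotientGroup.mk k)) = QuotientGroup.mk (e • k) := rfl

end SGA
namespace SGA2
open Subgroup SGA

variable {E : Type*} [Group E] [Finite E]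

lemma zpowers_eq_of_card_eq_prime {q : ℕ} (hq : q.Prime) {M : Subgroup E}
    (hM : Nat.card M = q) {e : E} (he : e ∈ M) (hne : e ≠ 1) :
    Subgroup.zpowers e = M := by
  have hle : Subgroup.zpowers e ≤ M := (Subgroup.zpowers_le).mpr he
  have h1 : Nat.card (Subgroup.zpowers e) = orderOf e := Nat.card_zpowers e
  have h2 : orderOf e ∣ q := by
    have h3 := Subgroup.card_dvd_of_le hle
    rwa [h1, hM] at h3
  rcases (Nat.Prime.eq_one_or_self_of_dvd hq _ h2) with h | h
  · exact absurd (orderOf_eq_one_iff.mp h) hne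
  · exact Subgroup.eq_of_le_of_card_ge hle (by rw [h1, h, hM])

theorem trace_gen (q : ℕ) (hq : q.Prime)
    (hcard : Nat.card E = q ^ 2) (hexp : ∀ e : E, e ^ q = 1)
    (V : Type*) [Group V] [Finite V] [MulDistribMulAction E V]
    (hcomm : ∀ x y : V, x * y = y * x)
    (hcop : ¬ q ∣ Nat.card V) (v : V) :
    v ∈ ⨆ (e : E) (_ : e ≠ 1), fixedSub V e := by
  classical
  letI : CommGroup V := { (inferInstance : Group V) with mul_comm := hcomm }
  haveI := Fact.mk hq
  haveI : Fintype E := Fintype.ofFinite E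
  haveI : Finite (Subgroup E) :=
    Finite.of_injective (fun M : Subgroup E => (M : Set E)) (fun _ _ h => SetLike.coe_injective h)
  haveI : Fintype (Subgroup E) := Fintype.ofFinite _
  set H := ⨆ (e : E) (_ : e ≠ 1), fixedSub V e with hH
  -- the order-q subgroups
  set S : Finset (Subgroup E) := Finset.univ.filter (fun M => Nat.card M = q) with hS
  set Mf : Subgroup E → Finset E := fun M => Set.toFinset (M : Set E) with hMf
  have hmemMf : ∀ (M : Subgroup E) (x : E), x ∈ Mf M ↔ x ∈ M := by
    intro M x; simp [hMf]
  have hMfcard : ∀ M : Subgroup E, (Mf M).card = Nat.card M := by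
    intro M
    rw [hMf]
    rw [Set.toFinset_card, ← Nat.card_eq_fintype_card]
    rfl
  set T : Subgroup E → V := fun M => ∏ m ∈ Mf M, m • v with hT
  -- T M v is fixed by every element of M
  have fixT : ∀ (M : Subgroup E) (e : E), e ∈ M → T M ∈ fixedSub V e := by
    intro M e he
    rw [mem_fixedSub]
    simp only [hT]
    calc e • ∏ m ∈ Mf M, m • v
        = ∏ m ∈ Mf M, e • (m • v) := by
          exact map_prod (MulDistribMulAction.toMulAut E V e) _ _
      _ = ∏ m ∈ Mf M, (e * m) • v := by
          refine Finset.prod_congr rfl fun m _ => ?_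
          rw [mul_smul]
      _ = ∏ m ∈ Mf M, m • v := by
          refine Finset.prod_nbij' (fun m => e * m) (fun m => e⁻¹ * m) ?_ ?_ ?_ ?_ ?_
          · intro a ha; rw [hmemMf] at *; exact M.mul_mem he ha
          · intro a ha; rw [hmemMf] at *; exact M.mul_mem (M.inv_mem he) ha
          · intro a _; group
          · intro a _; group
          · intro a _; rfl
  -- 1 is in each Mf M
  have hone : ∀ M : Subgroup E, (1 : E) ∈ Mf M := fun M => (hmemMf M 1).mpr M.one_mem
  -- membership in S
  have hSmem : ∀ {M : Subgroup E}, M ∈ S ↔ Nat.card M = q := by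
    intro M; simp [hS]
  -- each nontrivial element generates a member of S
  have hzp : ∀ {e : E}, e ≠ 1 → Subgroup.zpowers e ∈ S := by
    intro e hne
    rw [hSmem, Nat.card_zpowers]
    exact orderOf_eq_prime (hexp e) hne
  -- covering
  have hcover : S.biUnion (fun M => (Mf M).erase 1) = Finset.univ.erase 1 := by
    ext x
    simp only [Finset.mem_biUnion, Finset.mem_erase, Finset.mem_univ, and_true]
    constructor
    · rintro ⟨M, _, hx, _⟩; exact hx
    · intro hx
      exact ⟨Subgroup.zpowers x, hzp hx, hx, (hmemMf _ x).mpr (Subgroup.mem_zpowers x)⟩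
  -- disjointness
  have hdisj : ∀ M ∈ S, ∀ M' ∈ S, M ≠ M' →
      Disjoint ((Mf M).erase 1) ((Mf M').erase 1) := by
    intro M hM M' hM' hne
    rw [Finset.disjoint_left]
    intro x hx hx'
    obtain ⟨hx1, hxM⟩ := Finset.mem_erase.mp hx
    obtain ⟨_, hxM'⟩ := Finset.mem_erase.mp hx'
    rw [hmemMf] at hxM hxM'
    exact hne ((zpowers_eq_of_card_eq_prime hq (hSmem.mp hM) hxM hx1).symm.trans
      (zpowers_eq_of_card_eq_prime hq (hSmem.mp hM') hxM' hx1))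
  -- cardinality of S
  have hScard : S.card = q + 1 := by
    have h1 : (Finset.univ.erase (1 : E)).card = q ^ 2 - 1 := by
      rw [Finset.card_erase_of_mem (Finset.mem_univ 1), Finset.card_univ,
        ← Nat.card_eq_fintype_card, hcard]
    have h2 : (Finset.univ.erase (1 : E)).card = S.card * (q - 1) := by
      rw [← hcover, Finset.card_biUnion hdisj]
      rw [Finset.sum_congr rfl (fun M hM => ?_), Finset.sum_const, smul_eq_mul]
      rw [Finset.card_erase_of_mem (hone M), hMfcard, hSmem.mp hM]
    obtain ⟨t, rfl⟩ : ∃ t, q = t + 1 := ⟨q - 1, by have := hq.two_le; omega⟩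
    have hq1 : 0 < t + 1 - 1 := by have := hq.two_le; omega
    refine Nat.eq_of_mul_eq_mul_right hq1 ?_
    have e1 : (t + 1) ^ 2 = t * t + 2 * t + 1 := by ring
    have e2 : (t + 1 + 1) * (t + 1 - 1) = t * t + 2 * t := by
      simp only [Nat.add_sub_cancel]
      ring
    omega
  -- the key identity
  have hprod : ∏ M ∈ S, T M = v ^ q * T ⊤ := by
    have hMtop : Mf ⊤ = Finset.univ := by
      ext x
      simp only [Finset.mem_univ, iff_true]
      exact (hmemMf ⊤ x).mpr trivial
    have hTsplit : ∀ M : Subgroup E, T M = v * ∏ m ∈ (Mf M).erase 1, m • v := by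
      intro M
      simp only [hT]
      rw [← Finset.mul_prod_erase (Mf M) (fun m => m • v) (hone M), one_smul]
    have hdisj' : Set.PairwiseDisjoint (↑S) (fun M : Subgroup E => (Mf M).erase 1) := by
      intro M hM M' hM' hne
      exact hdisj M (Finset.mem_coe.mp hM) M' (Finset.mem_coe.mp hM') hne
    have hbig : ∏ M ∈ S, ∏ m ∈ (Mf M).erase 1, m • v
        = ∏ m ∈ Finset.univ.erase (1 : E), m • v := by
      rw [← hcover]
      exact (Finset.prod_biUnion hdisj').symm
    calc ∏ M ∈ S, T M = ∏ M ∈ S, (v * ∏ m ∈ (Mf M).erase 1, m • v) := by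
          exact Finset.prod_congr rfl fun M _ => hTsplit M
      _ = v ^ S.card * ∏ M ∈ S, ∏ m ∈ (Mf M).erase 1, m • v := by
          rw [Finset.prod_mul_distrib, Finset.prod_const]
      _ = v ^ (q + 1) * ∏ m ∈ Finset.univ.erase (1 : E), m • v := by
          rw [hScard, hbig]
      _ = v ^ q * (v * ∏ m ∈ Finset.univ.erase (1 : E), m • v) := by
          rw [pow_succ, mul_assoc]
      _ = v ^ q * T ⊤ := by
          rw [hTsplit ⊤, hMtop]
  -- E is nontrivial
  have hnontriv : Nontrivial E := by
    rw [← Finite.one_lt_card_iff_nontrivial, hcard]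
    exact Nat.one_lt_pow (by norm_num) hq.one_lt
  obtain ⟨e₀, he₀⟩ := exists_ne (1 : E)
  -- memberships in H
  have hTH : ∀ M ∈ S, T M ∈ H := by
    intro M hM
    have : Nontrivial M := by
      rw [← Finite.one_lt_card_iff_nontrivial, hSmem.mp hM]
      exact hq.one_lt
    obtain ⟨m₀, hm₀⟩ := exists_ne (1 : M)
    have hm₀ne : (m₀ : E) ≠ 1 := by
      intro h; exact hm₀ (Subtype.ext h)
    have : T M ∈ fixedSub V (m₀ : E) := fixT M m₀ m₀.2
    exact (le_iSup₂ (f := fun (e : E) (_ : e ≠ 1) => fixedSub V e) (m₀ : E) hm₀ne) this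
  have hTtopH : T ⊤ ∈ H :=
    (le_iSup₂ (f := fun (e : E) (_ : e ≠ 1) => fixedSub V e) e₀ he₀) (fixT ⊤ e₀ trivial)
  have hvqH : v ^ q ∈ H := by
    have h1 : ∏ M ∈ S, T M ∈ H := Subgroup.prod_mem H (fun M hM => hTH M hM)
    have := H.mul_mem h1 (H.inv_mem hTtopH)
    rw [hprod] at this
    rw [mul_assoc, mul_inv_cancel, mul_one] at this
    exact this
  -- conclude
  by_cases hv1 : v = 1
  · rw [hv1]; exact H.one_mem
  have hn : 1 < orderOf v := by
    have h0 : 0 < orderOf v := orderOf_pos v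
    have h1 : orderOf v ≠ 1 := fun h => hv1 (orderOf_eq_one_iff.mp h)
    omega
  have hcopr : Nat.Coprime q (orderOf v) := by
    rw [Nat.Prime.coprime_iff_not_dvd hq]
    intro hdvd
    exact hcop (hdvd.trans (orderOf_dvd_natCard v))
  obtain ⟨c, -, hc⟩ := Nat.exists_mul_mod_eq_one_of_coprime hcopr hn
  have : v = (v ^ q) ^ c := by
    rw [← pow_mul, ← pow_mod_orderOf, hc, pow_one]
  rw [this]
  exact pow_mem hvqH c

end SGA2
namespace SGA3
open Subgroup SGA SGA2

/-- fixed points in the quotient lift to fixed points, for coprime finite kernel -/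
lemma quot_fixed_le (q : ℕ) (hq : q.Prime) {E : Type*} [Group E] (hexp : ∀ e : E, e ^ q = 1)
    {K : Type*} [Group K] [MulDistribMulAction E K] (N : Subgroup K) [N.Normal] [Finite N]
    (h : ∀ (e : E) (x : K), x ∈ N → e • x ∈ N) (hcop : ¬ q ∣ Nat.card N) (e : E) :
    @fixedSub E (K ⧸ N) _ _ (quotAct N h) e ≤ (fixedSub K e).map (QuotientGroup.mk' N) := by
  letI := quotAct N h
  haveI := Fact.mk hq
  intro x hx
  obtain ⟨k, rfl⟩ := QuotientGroup.mk'_surjective N x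
  have hfix : e • (QuotientGroup.mk k : K ⧸ N) = QuotientGroup.mk k := hx
  have hst : Subgroup.zpowers e ≤ MulAction.stabilizer E (QuotientGroup.mk k : K ⧸ N) :=
    Subgroup.zpowers_le.mpr hfix
  set Z := Subgroup.zpowers e with hZ
  set F : Set K := {y : K | (QuotientGroup.mk y : K ⧸ N) = QuotientGroup.mk k} with hF
  have hFmem : ∀ (z : Z) (y : F), (z : E) • (y : K) ∈ F := by
    rintro z ⟨y, hy⟩
    have h1 : (QuotientGroup.mk ((z : E) • y) : K ⧸ N) = (z : E) • (QuotientGroup.mk y : K ⧸ N) :=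
      (quotAct_smul_mk N h (z : E) y).symm
    have h2 : (z : E) • (QuotientGroup.mk k : K ⧸ N) = QuotientGroup.mk k := hst z.2
    simp only [hF, Set.mem_setOf_eq] at hy ⊢
    rw [h1, hy, h2]
  letI : MulAction Z F :=
    { smul := fun z y => ⟨(z : E) • (y : K), hFmem z y⟩
      one_smul := fun y => Subtype.ext (by
        show ((1 : Z) : E) • (y : K) = y
        rw [OneMemClass.coe_one, one_smul])
      mul_smul := fun z w y => Subtype.ext (by
        show ((z * w : Z) : E) • (y : K) = (z : E) • ((w : E) • (y : K))
        rw [Subgroup.coe_mul, mul_smul]) }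
  have hpZ : IsPGroup q Z := by
    intro z
    exact ⟨1, by
      ext
      rw [pow_one, Subgroup.coe_pow, OneMemClass.coe_one]
      exact hexp (z : E)⟩
  have hcardF : Nat.card F = Nat.card N := by
    refine Nat.card_congr (Equiv.symm ⟨fun n => ⟨k * (n : K), ?_⟩, fun y => ⟨k⁻¹ * (y : K), ?_⟩,
      fun n => ?_, fun y => ?_⟩)
    · simp only [hF, Set.mem_setOf_eq, QuotientGroup.mk_mul]
      rw [(QuotientGroup.eq_one_iff (n : K)).mpr n.2, mul_one]
    · have := y.2
      simp only [hF, Set.mem_setOf_eq] at this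
      rw [← QuotientGroup.eq_one_iff, QuotientGroup.mk_mul, QuotientGroup.mk_inv, this,
        inv_mul_cancel]
    · ext; simp
    · ext; simp
  haveI : Finite F := by
    have : Nat.card F ≠ 0 := by
      rw [hcardF]
      exact Nat.card_pos.ne'
    exact Nat.finite_of_card_ne_zero this
  obtain ⟨⟨y, hyF⟩, hy⟩ := hpZ.nonempty_fixed_point_of_prime_not_dvd_card F
    (by rw [hcardF]; exact hcop)
  have hyfix : e • y = y := by
    have := hy ⟨e, Subgroup.mem_zpowers e⟩
    exact Subtype.ext_iff.mp this
  exact ⟨y, hyfix, hyF⟩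

/-- a `q`-group acting coprimely on a finite group leaves some Sylow `p`-subgroup invariant -/
lemma exists_invariant_sylow (q : ℕ) (hq : q.Prime) {E : Type*} [Group E] [Finite E]
    (hcard : Nat.card E = q ^ 2) {K : Type*} [Group K] [Finite K] [MulDistribMulAction E K]
    (hcop : ¬ q ∣ Nat.card K) (p : ℕ) [Fact p.Prime] :
    ∃ P : Sylow p K, ∀ (e : E) (x : K), x ∈ (P : Subgroup K) → e • x ∈ (P : Subgroup K) := by
  haveI := Fact.mk hq
  haveI : Finite (Subgroup K) :=
    Finite.of_injective (fun M : Subgroup K => (M : Set K)) (fun _ _ h => SetLike.coe_injective h)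
  haveI : Finite (Sylow p K) :=
    Finite.of_injective (fun P : Sylow p K => (P : Subgroup K)) (fun _ _ h => Sylow.ext h)
  obtain ⟨P₀⟩ := (inferInstance : Nonempty (Sylow p K))
  have hdvd : Nat.card (Sylow p K) ∣ Nat.card K :=
    (Sylow.card_dvd_index P₀).trans (Subgroup.index_dvd_card _)
  have hndvd : ¬ q ∣ Nat.card (Sylow p K) := fun hh => hcop (hh.trans hdvd)
  have hpE : IsPGroup q E := IsPGroup.of_card hcard
  obtain ⟨P, hP⟩ := hpE.nonempty_fixed_point_of_prime_not_dvd_card (Sylow p K) hndvd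
  refine ⟨P, fun e x hx => ?_⟩
  have h1 : e • P = P := hP e
  have h2 : e • (P : Subgroup K) = (P : Subgroup K) := by
    rw [← Sylow.pointwise_smul_def, h1]
  rw [← h2]
  exact Subgroup.smul_mem_pointwise_smul x e (P : Subgroup K) hx

/-- transport of the generation statement along the inclusion of an invariant subgroup -/
lemma map_subtype_iSup_le {E : Type*} [Group E] {K : Type*} [Group K] [MulDistribMulAction E K]
    (L : Subgroup K) (h : ∀ (e : E) (x : K), x ∈ L → e • x ∈ L) :
    Subgroup.map L.subtype (⨆ (e : E) (_ : e ≠ 1), @fixedSub E L _ _ (subAct L h) e)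
      ≤ ⨆ (e : E) (_ : e ≠ 1), fixedSub K e := by
  rw [(Subgroup.gc_map_comap L.subtype).l_iSup]
  refine iSup_le fun e => ?_
  rw [(Subgroup.gc_map_comap L.subtype).l_iSup]
  refine iSup_le fun he => ?_
  rw [map_subtype_fixedSub L h e]
  exact le_trans inf_le_right (le_iSup₂ (f := fun (e : E) (_ : e ≠ 1) => fixedSub K e) e he)

universe u v

/-- the generation theorem: a group of order `q²` and exponent `q` acting coprimely on a
finite group `K` generates `K` by the fixed subgroups of its nontrivial elements. -/
theorem gen_aux (q : ℕ) (hq : q.Prime) (E : Type v) [Group E] [Finite E]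
    (hcard : Nat.card E = q ^ 2) (hexp : ∀ e : E, e ^ q = 1) :
    ∀ (n : ℕ) (K : Type u) [Group K] [Finite K] [MulDistribMulAction E K],
      Nat.card K ≤ n → ¬ q ∣ Nat.card K →
      ∀ v : K, v ∈ ⨆ (e : E) (_ : e ≠ 1), fixedSub K e := by
  intro n
  induction n with
  | zero =>
    intro K _ _ _ hle _ v
    have : 0 < Nat.card K := Nat.card_pos
    omega
  | succ n ih =>
    intro K _ _ _ hle hcop v
    by_cases h1 : Nat.card K = 1
    · haveI : Subsingleton K := (Nat.card_eq_one_iff_unique.mp h1).1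
      rw [Subsingleton.elim v 1]
      exact Subgroup.one_mem _
    have hKpos : 0 < Nat.card K := Nat.card_pos
    set p := (Nat.card K).minFac with hpdef
    have hp : p.Prime := Nat.minFac_prime h1
    haveI := Fact.mk hp
    by_cases hpg : ∃ m, Nat.card K = p ^ m
    · -- p-group case
      obtain ⟨m, hm⟩ := hpg
      by_cases hcomm : ∀ x y : K, x * y = y * x
      · exact trace_gen q hq hcard hexp K hcomm hcop v
      · set Z := Subgroup.center K with hZdef
        have hZinv : ∀ (e : E) (x : K), x ∈ Z → e • x ∈ Z := by
          intro e x hx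
          rw [hZdef, Subgroup.mem_center_iff] at hx ⊢
          intro g
          have hg : g = e • (e⁻¹ • g) := (smul_inv_smul e g).symm
          rw [hg, ← smul_mul', ← smul_mul', hx (e⁻¹ • g)]
        haveI : Nontrivial K := Finite.one_lt_card_iff_nontrivial.mp (by omega)
        have hpK : IsPGroup p K := IsPGroup.of_card hm
        haveI hZnt : Nontrivial Z := hpK.center_nontrivial
        have hZne_top : Z ≠ ⊤ := by
          intro hh
          apply hcomm
          intro x y
          have hy : y ∈ Z := by rw [hh]; trivial
          exact Subgroup.mem_center_iff.mp hy x
        have hZdvd : Nat.card Z ∣ Nat.card K := Subgroup.card_subgroup_dvd_card Z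
        have hZcard_lt : Nat.card Z < Nat.card K :=
          lt_of_le_of_ne (Nat.le_of_dvd hKpos hZdvd)
            (fun hh => hZne_top (Subgroup.eq_top_of_card_eq Z hh))
        have hZgt1 : 1 < Nat.card Z := Finite.one_lt_card_iff_nontrivial.mpr hZnt
        have hcardprod : Nat.card K = Nat.card (K ⧸ Z) * Nat.card Z :=
          Subgroup.card_eq_card_quotient_mul_card_subgroup Z
        haveI : Finite (K ⧸ Z) := Quotient.finite _
        have hQpos : 0 < Nat.card (K ⧸ Z) := Nat.card_pos
        have hQlt : Nat.card (K ⧸ Z) < Nat.card K := by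
          rw [hcardprod]
          exact lt_mul_iff_one_lt_right hQpos |>.mpr hZgt1
        letI actZ := subAct (E := E) Z hZinv
        letI actQ := quotAct (E := E) Z hZinv
        set H := ⨆ (e : E) (_ : e ≠ 1), fixedSub K e with hH
        -- center is inside H
        have hZH : Z ≤ H := by
          intro z hz
          have h2 := ih ↥Z (by omega) (fun hd => hcop (hd.trans hZdvd)) ⟨z, hz⟩
          have h3 : z ∈ Subgroup.map Z.subtype
              (⨆ (e : E) (_ : e ≠ 1), @fixedSub E ↥Z _ _ (subAct Z hZinv) e) :=
            ⟨⟨z, hz⟩, h2, rfl⟩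
          exact map_subtype_iSup_le Z hZinv h3
        -- quotient generation
        have hv : (QuotientGroup.mk v : K ⧸ Z) ∈
            ⨆ (e : E) (_ : e ≠ 1), fixedSub (K ⧸ Z) e :=
          ih (K ⧸ Z) (by omega)
            (fun hd => hcop (hd.trans (Dvd.intro _ hcardprod.symm))) _
        have hle2 : (⨆ (e : E) (_ : e ≠ 1), fixedSub (K ⧸ Z) e)
            ≤ H.map (QuotientGroup.mk' Z) := by
          refine iSup₂_le fun e he => ?_
          refine le_trans (quot_fixed_le q hq hexp Z hZinv
            (fun hd => hcop (hd.trans hZdvd)) e) ?_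
          exact Subgroup.map_mono
            (le_iSup₂ (f := fun (e : E) (_ : e ≠ 1) => fixedSub K e) e he)
        have h4 : v ∈ (H.map (QuotientGroup.mk' Z)).comap (QuotientGroup.mk' Z) :=
          Subgroup.mem_comap.mpr (hle2 hv)
        rw [Subgroup.comap_map_eq, QuotientGroup.ker_mk', sup_of_le_left hZH] at h4
        exact h4
    · -- at least two primes divide |K|
      set H := ⨆ (e : E) (_ : e ≠ 1), fixedSub K e with hH
      suffices hHtop : H = ⊤ by rw [hHtop]; trivial
      have hHpos : 0 < Nat.card H := Nat.card_pos
      refine Subgroup.eq_top_of_card_eq H ?_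
      have hdvd1 : Nat.card H ∣ Nat.card K := Subgroup.card_subgroup_dvd_card H
      have hdvd2 : Nat.card K ∣ Nat.card H := by
        rw [← Nat.factorization_le_iff_dvd hKpos.ne' hHpos.ne']
        intro r
        by_cases hr : r.Prime ∧ r ∣ Nat.card K
        · obtain ⟨hrp, hrdvd⟩ := hr
          haveI := Fact.mk hrp
          obtain ⟨P, hPinv⟩ := exists_invariant_sylow q hq hcard hcop r
          letI actP := subAct (E := E) (P : Subgroup K) hPinv
          have hPcard : Nat.card P = r ^ (Nat.card K).factorization r :=
            P.card_eq_multiplicity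
          have hfac_pos : 0 < (Nat.card K).factorization r :=
            Nat.Prime.factorization_pos_of_dvd hrp hKpos.ne' hrdvd
          have hPdvd : Nat.card (P : Subgroup K) ∣ Nat.card K :=
            Subgroup.card_subgroup_dvd_card _
          have hPlt : Nat.card (P : Subgroup K) < Nat.card K := by
            refine lt_of_le_of_ne (Nat.le_of_dvd hKpos hPdvd) ?_
            intro hh
            apply hpg
            refine ⟨(Nat.card K).factorization r, ?_⟩
            have hKr : Nat.card K = r ^ (Nat.card K).factorization r := by
              rw [← hPcard, hh]
            have hpr : p = r := by
              have h5 : p ∣ r ^ (Nat.card K).factorization r := by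
                rw [← hKr]; exact Nat.minFac_dvd _
              have h6 : p ∣ r := hp.dvd_of_dvd_pow h5
              exact (Nat.prime_dvd_prime_iff_eq hp hrp).mp h6
            rw [hpr]
            exact hKr
          -- P is inside H
          have hPH : (P : Subgroup K) ≤ H := by
            intro y hy
            have h2 := ih ↥(P : Subgroup K) (by omega)
              (fun hd => hcop (hd.trans hPdvd)) ⟨y, hy⟩
            have h3 : y ∈ Subgroup.map (P : Subgroup K).subtype
                (⨆ (e : E) (_ : e ≠ 1),
                  @fixedSub E ↥(P : Subgroup K) _ _ (subAct _ hPinv) e) :=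
              ⟨⟨y, hy⟩, h2, rfl⟩
            exact map_subtype_iSup_le (P : Subgroup K) hPinv h3
          have h7 : r ^ (Nat.card K).factorization r ∣ Nat.card H := by
            rw [← hPcard]
            exact Subgroup.card_dvd_of_le hPH
          exact (Nat.Prime.pow_dvd_iff_le_factorization hrp hHpos.ne').mp h7
        · push_neg at hr
          rcases Classical.em r.Prime with hrp | hrp
          · rw [Nat.factorization_eq_zero_of_not_dvd (hr hrp)]
            omega
          · rw [Nat.factorization_eq_zero_of_not_prime _ hrp]
            omega
      exact Nat.dvd_antisymm hdvd1 hdvd2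

/-- every prime dividing `|K|` divides the order of some fixed subgroup -/
theorem prime_dvd_fixed (q : ℕ) (hq : q.Prime) (E : Type v) [Group E] [Finite E]
    (hcard : Nat.card E = q ^ 2) (hexp : ∀ e : E, e ^ q = 1)
    (K : Type u) [Group K] [Finite K] [MulDistribMulAction E K]
    (hcop : ¬ q ∣ Nat.card K) (p : ℕ) (hp : p.Prime) (hdvd : p ∣ Nat.card K) :
    ∃ e : E, e ≠ 1 ∧ p ∣ Nat.card (fixedSub K e) := by
  haveI := Fact.mk hp
  obtain ⟨P, hPinv⟩ := exists_invariant_sylow q hq hcard hcop p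
  letI actP := subAct (E := E) (P : Subgroup K) hPinv
  have hPcard : Nat.card P = p ^ (Nat.card K).factorization p := P.card_eq_multiplicity
  have hfac_pos : 0 < (Nat.card K).factorization p :=
    Nat.Prime.factorization_pos_of_dvd hp Nat.card_pos.ne' hdvd
  have hPnt : 1 < Nat.card (P : Subgroup K) := by
    rw [hPcard]
    exact Nat.one_lt_pow hfac_pos.ne' hp.one_lt
  haveI : Nontrivial ↥(P : Subgroup K) := Finite.one_lt_card_iff_nontrivial.mp hPnt
  obtain ⟨y, hy⟩ := exists_ne (1 : ↥(P : Subgroup K))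
  have hPcop : ¬ q ∣ Nat.card ↥(P : Subgroup K) :=
    fun hd => hcop (hd.trans (Subgroup.card_subgroup_dvd_card _))
  have hgen := gen_aux q hq E hcard hexp (Nat.card ↥(P : Subgroup K)) ↥(P : Subgroup K)
    le_rfl hPcop y
  -- some fixed subgroup of P is nontrivial
  have hex : ∃ e : E, e ≠ 1 ∧ (@fixedSub E ↥(P : Subgroup K) _ _ actP e) ≠ ⊥ := by
    by_contra hcon
    push_neg at hcon
    have : (⨆ (e : E) (_ : e ≠ 1), @fixedSub E ↥(P : Subgroup K) _ _ actP e) = ⊥ := by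
      refine le_bot_iff.mp (iSup₂_le fun e he => ?_)
      rw [hcon e he]
    rw [this] at hgen
    exact hy (Subgroup.mem_bot.mp hgen)
  obtain ⟨e, he, hne⟩ := hex
  refine ⟨e, he, ?_⟩
  set Fp := @fixedSub E ↥(P : Subgroup K) _ _ actP e with hFp
  have hdvdP : Nat.card Fp ∣ Nat.card ↥(P : Subgroup K) := Subgroup.card_subgroup_dvd_card _
  have hFpnt : 1 < Nat.card Fp := by
    have h0 : 0 < Nat.card Fp := Nat.card_pos
    have h1 : Nat.card Fp ≠ 1 := by
      intro hh
      apply hne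
      refine (Subgroup.eq_bot_iff_forall _).mpr fun x hx => ?_
      haveI : Subsingleton ↥Fp := (Nat.card_eq_one_iff_unique.mp hh).1
      exact congrArg Subtype.val (Subsingleton.elim (⟨x, hx⟩ : ↥Fp) ⟨1, Fp.one_mem⟩)
    omega
  have hpdvdFp : p ∣ Nat.card Fp := by
    have h2 : Nat.card Fp ∣ p ^ (Nat.card K).factorization p := by
      rw [← hPcard]; exact hdvdP
    obtain ⟨j, hj, hjeq⟩ := (Nat.dvd_prime_pow hp).mp h2
    have hjpos : j ≠ 0 := by
      intro hh
      rw [hh, pow_zero] at hjeq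
      omega
    rw [hjeq]
    exact dvd_pow_self p hjpos
  -- transport into K
  have hle : Subgroup.map (P : Subgroup K).subtype Fp ≤ fixedSub K e := by
    rw [hFp, map_subtype_fixedSub]
    exact inf_le_right
  have hcardeq : Nat.card Fp = Nat.card (Subgroup.map (P : Subgroup K).subtype Fp) :=
    Nat.card_congr (Subgroup.equivMapOfInjective Fp _ (Subgroup.subtype_injective _)).toEquiv
  rw [hcardeq] at hpdvdFp
  exact hpdvdFp.trans (Subgroup.card_dvd_of_le hle)

end SGA3
namespace SGA4
open Subgroup SGA SGA2 SGA3

variable {A : Type*} [CommGroup A] [Finite A]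

/-- a noncyclic finite abelian group contains two "independent" elements of prime order `q` -/
lemma exists_indep (B : Subgroup A) (hB : ¬ IsCyclic B) :
    ∃ (q : ℕ) (a b : A), q.Prime ∧ a ∈ B ∧ b ∈ B ∧ orderOf a = q ∧ orderOf b = q ∧
      ∀ i j : ℕ, a ^ i * b ^ j = 1 → q ∣ i ∧ q ∣ j := by
  classical
  set H := ↥B
  obtain ⟨g, hg⟩ := Monoid.exists_orderOf_eq_exponent (Monoid.ExponentExists.of_finite (G := H))
  set e := Monoid.exponent H with hedef
  have hepos : e ≠ 0 := Monoid.exponent_ne_zero_of_finite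
  have hgtop : Subgroup.zpowers g ≠ ⊤ := by
    intro hh
    refine hB ⟨⟨g, fun x => ?_⟩⟩
    have hx : x ∈ Subgroup.zpowers g := hh ▸ Subgroup.mem_top x
    exact Subgroup.mem_zpowers_iff.mp hx
  set N := Subgroup.zpowers g with hNdef
  have hQcard : Nat.card H = Nat.card (H ⧸ N) * Nat.card N :=
    Subgroup.card_eq_card_quotient_mul_card_subgroup N
  have hQne1 : Nat.card (H ⧸ N) ≠ 1 := by
    intro hh
    apply hgtop
    refine Subgroup.eq_top_of_card_eq N ?_
    rw [hQcard, hh, one_mul]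
  set q := (Nat.card (H ⧸ N)).minFac with hqdef
  have hq : q.Prime := Nat.minFac_prime hQne1
  haveI := Fact.mk hq
  haveI : Finite (H ⧸ N) := Quotient.finite _
  obtain ⟨ybar, hybar⟩ := exists_prime_orderOf_dvd_card' (G := H ⧸ N) q (Nat.minFac_dvd _)
  obtain ⟨y, rfl⟩ := QuotientGroup.mk'_surjective N ybar
  have hqy : q ∣ orderOf y := by
    rw [← hybar]
    exact orderOf_map_dvd (QuotientGroup.mk' N) y
  have hyord : orderOf y ≠ 0 := (orderOf_pos y).ne'
  set α := (orderOf y).factorization q with hα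
  set m := orderOf y / q ^ α with hm
  have hαpos : 0 < α := by
    rw [hα]
    exact Nat.Prime.factorization_pos_of_dvd hq hyord hqy
  have hmq : ¬ q ∣ m := Nat.not_dvd_ordCompl hq hyord
  set y₁ := y ^ m with hy₁
  have hordy₁ : orderOf y₁ = q ^ α := by
    rw [hy₁, orderOf_pow]
    rw [hm, hα, Nat.gcd_eq_right (Nat.ordCompl_dvd _ _)]
    exact Nat.div_div_self (Nat.ordProj_dvd _ _) hyord
  have hy₁notin : y₁ ∉ N := by
    intro hh
    have h1 : (QuotientGroup.mk' N) y₁ = 1 := (QuotientGroup.eq_one_iff y₁).mpr hh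
    rw [hy₁, map_pow] at h1
    have h2 : orderOf ((QuotientGroup.mk' N) y) ∣ m := orderOf_dvd_of_pow_eq_one h1
    rw [hybar] at h2
    exact hmq h2
  -- minimal power landing in N
  have hPα : y₁ ^ q ^ α ∈ N := by
    rw [← hordy₁, pow_orderOf_eq_one]
    exact N.one_mem
  have hex : ∃ k, y₁ ^ q ^ k ∈ N := ⟨α, hPα⟩
  set j := Nat.find hex with hjdef
  have hj : y₁ ^ q ^ j ∈ N := Nat.find_spec hex
  have hjpos : j ≠ 0 := by
    intro hh
    have := hj
    rw [hh, pow_zero, pow_one] at this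
    exact hy₁notin this
  have hjm : ¬ y₁ ^ q ^ (j - 1) ∈ N := Nat.find_min hex (by omega)
  set z := y₁ ^ q ^ (j - 1) with hz
  have hzq : z ^ q ∈ N := by
    rw [hz, ← pow_mul, ← pow_succ]
    have : j - 1 + 1 = j := by omega
    rw [this]
    exact hj
  obtain ⟨t, ht0⟩ := hzq
  have ht : g ^ t = z ^ q := ht0
  -- q divides t
  have hqe : q ∣ e := by
    have h1 : orderOf y₁ ∣ e := Monoid.order_dvd_exponent y₁
    rw [hordy₁] at h1
    exact (dvd_pow_self q hαpos.ne').trans h1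
  set e' := e / q with he'
  have hee' : e = q * e' := (Nat.mul_div_cancel' hqe).symm
  have he'pos : e' ≠ 0 := by
    intro hh
    rw [hh, mul_zero] at hee'
    exact hepos hee'
  have hze : z ^ e = 1 := Monoid.pow_exponent_eq_one z
  have hge : orderOf g = e := hg
  have hqt : (q : ℤ) ∣ t := by
    have h1 : (g ^ t) ^ (e' : ℤ) = 1 := by
      rw [ht, zpow_natCast, ← pow_mul, ← hee', hze]
    rw [← zpow_mul] at h1
    have h2 : (orderOf g : ℤ) ∣ t * e' := orderOf_dvd_iff_zpow_eq_one.mpr h1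
    rw [hge, hee'] at h2
    push_cast at h2
    have h3 := (mul_dvd_mul_iff_right (by exact_mod_cast he'pos : (e' : ℤ) ≠ 0)).mp h2
    exact h3
  obtain ⟨u, hu⟩ := hqt
  set w := z * (g ^ u)⁻¹ with hw
  have hwq : w ^ q = 1 := by
    rw [hw, mul_pow, inv_pow, ← zpow_natCast (g ^ u), ← zpow_mul]
    have huq : (u * q : ℤ) = t := by rw [hu]; ring
    rw [huq, ht]
    simp
  have hwnotin : w ∉ N := by
    intro hh
    apply hjm
    have hzw : z = w * g ^ u := by rw [hw, inv_mul_cancel_right]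
    rw [hzw]
    exact N.mul_mem hh (N.zpow_mem (Subgroup.mem_zpowers g) u)
  have hwne : w ≠ 1 := fun hh => hwnotin (hh ▸ N.one_mem)
  have hordw : orderOf w = q := orderOf_eq_prime hwq hwne
  set x := g ^ (e / q) with hx
  have hordx : orderOf x = q := by
    rw [hx, orderOf_pow, hge, Nat.gcd_eq_right (Nat.div_dvd_of_dvd hqe),
      Nat.div_div_self hqe hepos]
  have hxN : x ∈ N := N.pow_mem (Subgroup.mem_zpowers g) _
  -- independence inside H
  have hindep : ∀ i j : ℕ, x ^ i * w ^ j = 1 → q ∣ i ∧ q ∣ j := by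
    intro i j' hij
    have hqj : q ∣ j' := by
      by_contra hnd
      have hco : Nat.Coprime j' q := ((Nat.Prime.coprime_iff_not_dvd hq).mpr hnd).symm
      obtain ⟨c, -, hc⟩ := Nat.exists_mul_mod_eq_one_of_coprime hco hq.one_lt
      have hwjN : w ^ j' ∈ N := by
        have h1 : (x ^ i)⁻¹ = w ^ j' := inv_eq_of_mul_eq_one_right hij
        rw [← h1]
        exact N.inv_mem (N.pow_mem hxN i)
      apply hwnotin
      have h2 : w = (w ^ j') ^ c := by
        rw [← pow_mul, ← pow_mod_orderOf, hordw, hc, pow_one]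
      rw [h2]
      exact N.pow_mem hwjN c
    have hwj : w ^ j' = 1 := by
      obtain ⟨c, rfl⟩ := hqj
      rw [pow_mul, ← hordw, pow_orderOf_eq_one, one_pow]
    rw [hwj, mul_one] at hij
    exact ⟨hordx ▸ orderOf_dvd_of_pow_eq_one hij, hqj⟩
  exact ⟨q, (x : A), (w : A), hq, x.2, w.2, by
      rw [← hordx]; exact orderOf_injective B.subtype (Subgroup.subtype_injective B) x, by
      rw [← hordw]; exact orderOf_injective B.subtype (Subgroup.subtype_injective B) w, by
      intro i j' hij
      refine hindep i j' ?_
      have : ((x ^ i * w ^ j' : H) : A) = 1 := by push_cast; exact hij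
      exact_mod_cast this⟩

end SGA4
namespace SGA5
open Subgroup SGA SGA2 SGA3 SGA4

variable {A : Type*} [CommGroup A] [Finite A]

/-- packaging: a noncyclic subgroup contains a subgroup of order `q²` and exponent `q` -/
lemma exists_E' (B : Subgroup A) (hB : ¬ IsCyclic B) :
    ∃ (q : ℕ) (E' : Subgroup A), q.Prime ∧ E' ≤ B ∧ Nat.card E' = q ^ 2 ∧
      (∀ s ∈ E', s ^ q = 1) ∧ ∃ a ∈ E', orderOf a = q := by
  obtain ⟨q, a, b, hq, haB, hbB, hoa, hob, hind⟩ := exists_indep B hB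
  haveI : NeZero q := ⟨hq.pos.ne'⟩
  haveI : Fact (1 < q) := ⟨hq.one_lt⟩
  have haq : a ^ q = 1 := by rw [← hoa]; exact pow_orderOf_eq_one a
  have hbq : b ^ q = 1 := by rw [← hob]; exact pow_orderOf_eq_one b
  set f : ZMod q × ZMod q → A := fun pr => a ^ pr.1.val * b ^ pr.2.val with hf
  have hamod : ∀ i k : ℕ, i % q = k % q → a ^ i = a ^ k := by
    intro i k h
    rw [pow_eq_pow_iff_modEq, hoa]
    exact h
  have hbmod : ∀ i k : ℕ, i % q = k % q → b ^ i = b ^ k := by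
    intro i k h
    rw [pow_eq_pow_iff_modEq, hob]
    exact h
  have hmul : ∀ p1 p2 : ZMod q × ZMod q, f p1 * f p2 = f (p1 + p2) := by
    rintro ⟨i, j⟩ ⟨k, l⟩
    show a ^ i.val * b ^ j.val * (a ^ k.val * b ^ l.val)
      = a ^ (i + k).val * b ^ (j + l).val
    rw [mul_mul_mul_comm, ← pow_add, ← pow_add]
    have h1 : a ^ (i.val + k.val) = a ^ (i + k).val := by
      refine hamod _ _ ?_
      rw [ZMod.val_add]
      rw [Nat.mod_mod_of_dvd _ dvd_rfl]
    have h2 : b ^ (j.val + l.val) = b ^ (j + l).val := by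
      refine hbmod _ _ ?_
      rw [ZMod.val_add]
      rw [Nat.mod_mod_of_dvd _ dvd_rfl]
    rw [h1, h2]
  have hone : f 0 = 1 := by
    show a ^ (0 : ZMod q).val * b ^ (0 : ZMod q).val = 1
    rw [ZMod.val_zero, pow_zero, pow_zero, mul_one]
  set S : Subgroup A :=
    { carrier := Set.range f
      one_mem' := ⟨0, hone⟩
      mul_mem' := by
        rintro _ _ ⟨p1, rfl⟩ ⟨p2, rfl⟩
        exact ⟨p1 + p2, (hmul p1 p2).symm⟩
      inv_mem' := by
        rintro _ ⟨p, rfl⟩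
        refine ⟨-p, ?_⟩
        have h3 := hmul (-p) p
        rw [neg_add_cancel, hone] at h3
        exact eq_inv_of_mul_eq_one_left h3 } with hSdef
  have hfa : f (1, 0) = a := by
    show a ^ (1 : ZMod q).val * b ^ (0 : ZMod q).val = a
    rw [ZMod.val_one, ZMod.val_zero, pow_one, pow_zero, mul_one]
  have hmemS : ∀ pr : ZMod q × ZMod q, f pr ∈ S := fun pr => ⟨pr, rfl⟩
  have hSB : S ≤ B := by
    rintro _ ⟨⟨i, j⟩, rfl⟩
    exact B.mul_mem (B.pow_mem haB _) (B.pow_mem hbB _)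
  have hSexp : ∀ s ∈ S, s ^ q = 1 := by
    rintro _ ⟨⟨i, j⟩, rfl⟩
    show (a ^ i.val * b ^ j.val) ^ q = 1
    rw [mul_pow, ← pow_mul, ← pow_mul, mul_comm i.val q, mul_comm j.val q, pow_mul, pow_mul,
      haq, hbq, one_pow, one_pow, mul_one]
  have hinj : Function.Injective f := by
    rintro ⟨i, j⟩ ⟨k, l⟩ h
    have hvi : i.val < q := ZMod.val_lt i
    have hvk : k.val < q := ZMod.val_lt k
    have hvj : j.val < q := ZMod.val_lt j
    have hvl : l.val < q := ZMod.val_lt l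
    have h' : a ^ i.val * b ^ j.val = a ^ k.val * b ^ l.val := h
    have key : a ^ (i.val + (q - k.val)) * b ^ (j.val + (q - l.val)) = 1 := by
      rw [pow_add, pow_add, mul_mul_mul_comm, h', mul_mul_mul_comm, ← pow_add, ← pow_add,
        Nat.add_sub_cancel' hvk.le, Nat.add_sub_cancel' hvl.le, haq, hbq, mul_one]
    obtain ⟨hdi, hdj⟩ := hind _ _ key
    have hik : i.val = k.val := by
      obtain ⟨s, hs⟩ := hdi
      rcases Nat.lt_or_ge s 2 with hs2 | hs2
      · interval_cases s <;> omega
      · have h3 : q * 2 ≤ q * s := Nat.mul_le_mul_left q hs2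
        omega
    have hjl : j.val = l.val := by
      obtain ⟨s, hs⟩ := hdj
      rcases Nat.lt_or_ge s 2 with hs2 | hs2
      · interval_cases s <;> omega
      · have h3 : q * 2 ≤ q * s := Nat.mul_le_mul_left q hs2
        omega
    have : i = k := ZMod.val_injective q hik
    have : j = l := ZMod.val_injective q hjl
    simp_all
  have hScard : Nat.card S = q ^ 2 := by
    have h1 : Nat.card S = Nat.card (Set.range f) := rfl
    rw [h1, Nat.card_range_of_injective hinj, Nat.card_prod, Nat.card_zmod, sq]
  exact ⟨q, S, hq, hSB, hScard, hSexp, a, hfa ▸ hmemS (1, 0), hoa⟩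

variable {G : Type*} [Group G] [MulDistribMulAction A G]

/-- the action of a subgroup of `A` on `G` -/
def subgAct (E' : Subgroup A) : MulDistribMulAction ↥E' G where
  smul e g := (e : A) • g
  one_smul g := by
    show ((1 : ↥E') : A) • g = g
    rw [OneMemClass.coe_one, one_smul]
  mul_smul e f g := by
    show ((e * f : ↥E') : A) • g = (e : A) • ((f : A) • g)
    rw [Subgroup.coe_mul, mul_smul]
  smul_mul e x y := smul_mul' _ _ _
  smul_one e := smul_one _

lemma gen_G (q : ℕ) (hq : q.Prime) (E' : Subgroup A) (hcardE : Nat.card E' = q ^ 2)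
    (hexpE : ∀ s ∈ E', s ^ q = 1) (K : Subgroup G) (hfin : Finite ↥K)
    (hinv : ∀ e ∈ E', ∀ x ∈ K, e • x ∈ K) (hcop : ¬ q ∣ Nat.card K) :
    K ≤ ⨆ (s : A) (_ : s ∈ E' ∧ s ≠ 1), (K ⊓ fixedSub G s) := by
  letI actG := subgAct (G := G) E'
  have hinv' : ∀ (e : ↥E') (x : G), x ∈ K → e • x ∈ K := fun e x hx => hinv e e.2 x hx
  letI actK := subAct (E := ↥E') K hinv'
  have hexpE' : ∀ e : ↥E', e ^ q = 1 := by
    intro e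
    ext
    rw [SubgroupClass.coe_pow, OneMemClass.coe_one]
    exact hexpE e e.2
  have hle : Subgroup.map K.subtype (⨆ (e : ↥E') (_ : e ≠ 1), fixedSub ↥K e)
      ≤ ⨆ (s : A) (_ : s ∈ E' ∧ s ≠ 1), (K ⊓ fixedSub G s) := by
    rw [(Subgroup.gc_map_comap K.subtype).l_iSup]
    refine iSup_le fun e => ?_
    rw [(Subgroup.gc_map_comap K.subtype).l_iSup]
    refine iSup_le fun he => ?_
    rw [map_subtype_fixedSub K hinv' e]
    have heq : (@fixedSub ↥E' G _ _ actG e) = fixedSub G (e : A) := rfl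
    rw [heq]
    refine le_iSup₂ (f := fun (s : A) (_ : s ∈ E' ∧ s ≠ 1) => K ⊓ fixedSub G s)
      (e : A) ⟨e.2, ?_⟩
    intro hh
    exact he (Subtype.ext hh)
  intro x hx
  have h2 := gen_aux q hq ↥E' hcardE hexpE' (Nat.card ↥K) ↥K le_rfl hcop ⟨x, hx⟩
  exact hle ⟨⟨x, hx⟩, h2, rfl⟩

lemma prime_G (q : ℕ) (hq : q.Prime) (E' : Subgroup A) (hcardE : Nat.card E' = q ^ 2)
    (hexpE : ∀ s ∈ E', s ^ q = 1) (K : Subgroup G) (hfin : Finite ↥K)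
    (hinv : ∀ e ∈ E', ∀ x ∈ K, e • x ∈ K) (hcop : ¬ q ∣ Nat.card K)
    (p : ℕ) (hp : p.Prime) (hdvd : p ∣ Nat.card K) :
    ∃ s : A, (s ∈ E' ∧ s ≠ 1) ∧ p ∣ Nat.card (K ⊓ fixedSub G s : Subgroup G) := by
  letI actG := subgAct (G := G) E'
  have hinv' : ∀ (e : ↥E') (x : G), x ∈ K → e • x ∈ K := fun e x hx => hinv e e.2 x hx
  letI actK := subAct (E := ↥E') K hinv'
  have hexpE' : ∀ e : ↥E', e ^ q = 1 := by
    intro e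
    ext
    rw [SubgroupClass.coe_pow, OneMemClass.coe_one]
    exact hexpE e e.2
  obtain ⟨e, he, hpd⟩ := prime_dvd_fixed q hq ↥E' hcardE hexpE' ↥K hcop p hp hdvd
  refine ⟨(e : A), ⟨e.2, fun hh => he (Subtype.ext hh)⟩, ?_⟩
  have hcardeq : Nat.card (fixedSub ↥K e)
      = Nat.card (Subgroup.map K.subtype (fixedSub ↥K e)) :=
    Nat.card_congr (Subgroup.equivMapOfInjective _ _ (Subgroup.subtype_injective _)).toEquiv
  rw [hcardeq, map_subtype_fixedSub K hinv' e] at hpd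
  have heq : (@fixedSub ↥E' G _ _ actG e) = fixedSub G (e : A) := rfl
  rwa [heq] at hpd

end SGA5

open SGA SGA2 SGA3 SGA4 SGA5 Subgroup

/-- Let `A` be a noncyclic finite abelian group acting on a (possibly infinite)
group `G`, `θ` an `A`-signalizer functor on `G`, and `B ≤ A` noncyclic.  If the
restriction `θ₀` of `θ` to `B` is complete, then `θ` is complete and the
completion of `θ` equals the completion of `θ₀`. -/
theorem complete_of_restriction_complete
    {A G : Type*} [CommGroup A] [Finite A] [Group G] [MulDistribMulAction A G]
    (hA : ¬ IsCyclic A) (θ : A → Subgroup G)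
    (hθ : IsSignalizerFunctorOn ⊤ θ)
    (B : Subgroup A) (hB : ¬ IsCyclic B)
    (K₀ : Subgroup G) (hK₀ : IsCompletionOn B θ K₀) :
    IsCompletionOn ⊤ θ K₀ := by
  obtain ⟨hK₀fin, hK₀inv, hK₀cop, hK₀fix⟩ := hK₀
  haveI := hK₀fin
  obtain ⟨q, E', hq, hE'B, hcardE, hexpE, a₀, ha₀E, ha₀ord⟩ := exists_E' B hB
  -- q divides the relevant orders
  have hqB : q ∣ Nat.card B := by
    have h1 : orderOf (B.subtype ⟨a₀, hE'B ha₀E⟩) = orderOf (⟨a₀, hE'B ha₀E⟩ : ↥B) :=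
      orderOf_injective B.subtype (Subgroup.subtype_injective B) _
    have h2 : orderOf (⟨a₀, hE'B ha₀E⟩ : ↥B) = q := by
      rw [← ha₀ord, ← h1]; rfl
    rw [← h2]
    exact orderOf_dvd_natCard _
  have hqTop : q ∣ Nat.card (⊤ : Subgroup A) := by
    rw [Subgroup.card_top, ← ha₀ord]
    exact orderOf_dvd_natCard a₀
  have hcopK₀q : ¬ q ∣ Nat.card K₀ := by
    intro hd
    have h1 : q ∣ Nat.gcd (Nat.card K₀) (Nat.card B) := Nat.dvd_gcd hd hqB
    rw [hK₀cop] at h1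
    exact hq.one_lt.ne' (Nat.dvd_one.mp h1)
  have hK₀inv' : ∀ e ∈ E', ∀ x ∈ K₀, e • x ∈ K₀ := by
    intro e he x hx
    rw [← hK₀inv e (hE'B he)]
    exact Subgroup.smul_mem_pointwise_smul x e K₀ hx
  -- the key equality
  have key : ∀ c : A, c ≠ 1 → K₀ ⊓ fixedSub G c = θ c := by
    intro c hc
    obtain ⟨hfinθ, hinvθ, hleθ, hcopθ, hbalθ⟩ := hθ c trivial hc
    apply le_antisymm
    · set L := K₀ ⊓ fixedSub G c with hL
      haveI : Finite ↥L :=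
        Finite.of_injective (Subgroup.inclusion (inf_le_left : L ≤ K₀))
          (Subgroup.inclusion_injective _)
      have hLinv : ∀ e ∈ E', ∀ x ∈ L, e • x ∈ L := by
        intro e he x hx
        obtain ⟨hx1, hx2⟩ := hx
        refine ⟨hK₀inv' e he x hx1, ?_⟩
        have hx2' : c • x = x := hx2
        show c • (e • x) = e • x
        rw [← mul_smul, mul_comm, mul_smul, hx2']
      have hLcop : ¬ q ∣ Nat.card L :=
        fun hd => hcopK₀q (hd.trans (Subgroup.card_dvd_of_le inf_le_left))
      have h3 := gen_G q hq E' hcardE hexpE L inferInstance hLinv hLcop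
      refine le_trans h3 (iSup₂_le fun s hs => ?_)
      obtain ⟨hsE, hsne⟩ := hs
      have h4 : L ⊓ fixedSub G s ≤ θ s ⊓ fixedSub G c := by
        refine le_inf ?_ (le_trans inf_le_left inf_le_right)
        rw [← hK₀fix s (hE'B hsE) hsne]
        exact le_inf (le_trans inf_le_left inf_le_left) inf_le_right
      exact le_trans h4 ((hθ s trivial hsne).2.2.2.2 c trivial hc)
    · refine le_inf ?_ hleθ
      haveI := hfinθ
      have hinv2 : ∀ e ∈ E', ∀ x ∈ θ c, e • x ∈ θ c := by
        intro e he x hx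
        rw [← hinvθ e trivial]
        exact Subgroup.smul_mem_pointwise_smul x e _ hx
      have hcop2 : ¬ q ∣ Nat.card (θ c) := by
        intro hd
        have h1 : q ∣ Nat.gcd (Nat.card (θ c)) (Nat.card (⊤ : Subgroup A)) :=
          Nat.dvd_gcd hd hqTop
        rw [hcopθ] at h1
        exact hq.one_lt.ne' (Nat.dvd_one.mp h1)
      have h3 := gen_G q hq E' hcardE hexpE (θ c) inferInstance hinv2 hcop2
      refine le_trans h3 (iSup₂_le fun s hs => ?_)
      obtain ⟨hsE, hsne⟩ := hs
      have h5 : θ c ⊓ fixedSub G s ≤ θ s := hbalθ s trivial hsne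
      refine le_trans h5 ?_
      rw [← hK₀fix s (hE'B hsE) hsne]
      exact inf_le_left
  -- K₀ as a join of the θ s
  have hK₀eq : K₀ = ⨆ (s : A) (_ : s ∈ E' ∧ s ≠ 1), θ s := by
    apply le_antisymm
    · have h3 := gen_G q hq E' hcardE hexpE K₀ inferInstance hK₀inv' hcopK₀q
      refine le_trans h3 (iSup₂_le fun s hs => ?_)
      rw [key s hs.2]
      exact le_iSup₂ (f := fun (s : A) (_ : s ∈ E' ∧ s ≠ 1) => θ s) s hs
    · refine iSup₂_le fun s hs => ?_
      rw [← key s hs.2]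
      exact inf_le_left
  refine ⟨hK₀fin, ?_, ?_, fun c _ hc => key c hc⟩
  · -- A-invariance
    intro c _
    rw [hK₀eq, Subgroup.pointwise_smul_def]
    erw [(Subgroup.gc_map_comap _).l_iSup]
    refine iSup_congr fun s => ?_
    erw [(Subgroup.gc_map_comap _).l_iSup]
    refine iSup_congr fun hs => ?_
    rw [← Subgroup.pointwise_smul_def]
    exact (hθ s trivial hs.2).2.1 c trivial
  · -- coprimality
    by_contra hcon
    obtain ⟨p, hp0, hp1, hp2⟩ := Nat.Prime.not_coprime_iff_dvd.mp hcon
    have hp : p.Prime := hp0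
    obtain ⟨s, hs, hpd⟩ := prime_G q hq E' hcardE hexpE K₀ inferInstance hK₀inv' hcopK₀q
      p hp hp1
    rw [key s hs.2] at hpd
    have hco := (hθ s trivial hs.2).2.2.2.1
    have h6 : p ∣ Nat.gcd (Nat.card (θ s)) (Nat.card (⊤ : Subgroup A)) :=
      Nat.dvd_gcd hpd hp2
    rw [hco] at h6
    exact hp.one_lt.ne' (Nat.dvd_one.mp h6)
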